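/- Let n ≥ 1, N ≥ 0 and m ∈ {1,…,n}. Then n · ∑_{𝐤′, 𝐤″ ∈ ℤ_{≥0}^n, |𝐤′| = |𝐤″| = N} I_m(𝐤′, 𝐤″) = (2N + n) · C(N+n−1, n−1), where the double sum runs over all pairs of multi-indices of nonnegative integers each with coordinate sum N, and C(·,·) denotes the binomial coefficient. (In particular, all off-diagonal terms I_m(𝐤′,𝐤″) with 𝐤′ ≠ 𝐤″ vanish on this set.) -/

import Mathlib

open Finset

lemma card_rec (k N : ℕ) : (Finset.Nat.antidiagonalTuple (k+1) N).card
    = ∑ x ∈ Finset.HasAntidiagonal.antidiagonal N, (Finset.Nat.antidiagonalTuple k x.2).card := by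
  classical
  rw [Finset.sum]
  simp only [Finset.card, Finset.Nat.antidiagonalTuple, Multiset.Nat.antidiagonalTuple,
    List.Nat.antidiagonalTuple, Finset.Nat.instHasAntidiagonal, Multiset.Nat.antidiagonal]
  simp only [Multiset.map_coe, Multiset.sum_coe, Multiset.coe_card, List.length_flatMap]
  congr 1
  apply List.map_congr_left
  intro x _
  simp

lemma card_adt (n N : ℕ) : (Finset.Nat.antidiagonalTuple (n+1) N).card = (N + n).choose n := by
  induction n generalizing N with
  | zero => simp
  | succ k ih =>
    rw [card_rec, Finset.Nat.sum_antidiagonal_eq_sum_range_succ_mk]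
    simp only [ih]
    rw [← Finset.sum_range_reflect]
    have : ∀ j ∈ Finset.range N.succ,
        (N - (N.succ - 1 - j) + k).choose k = (j + k).choose k := by
      intro j hj
      rw [Finset.mem_range] at hj
      congr 2
      omega
    rw [Finset.sum_congr rfl this, Nat.sum_range_add_choose N k]
    congr 1

open Finset



/-- The function `I_m(𝐤,𝐤′)`. -/
def Imf {n : ℕ} (m : Fin n) (k k' : Fin n → ℕ) : ℤ :=
  if k = k' then 2 * (k m : ℤ) + 1
  else if (∀ j, j ≠ m → k j = k' j) ∧ (k m = k' m + 1 ∨ k' m = k m + 1) then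
    -(max (k m) (k' m) : ℤ)
  else 0

lemma offdiag {n : ℕ} {N : ℕ} (m : Fin n) {k k' : Fin n → ℕ}
    (hk : k ∈ Finset.Nat.antidiagonalTuple n N)
    (hk' : k' ∈ Finset.Nat.antidiagonalTuple n N) (hne : k' ≠ k) :
    Imf m k k' = 0 := by
  rw [Finset.Nat.mem_antidiagonalTuple] at hk hk'
  unfold Imf
  rw [if_neg (fun h => hne h.symm), if_neg]
  rintro ⟨h1, h2⟩
  have hs : ∑ j, k j = ∑ j, k' j := hk.trans hk'.symm
  rw [← Finset.add_sum_erase _ k (Finset.mem_univ m),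
      ← Finset.add_sum_erase _ k' (Finset.mem_univ m)] at hs
  have hr : ∑ j ∈ Finset.univ.erase m, k j = ∑ j ∈ Finset.univ.erase m, k' j :=
    Finset.sum_congr rfl fun j hj => h1 j (Finset.mem_erase.mp hj).1
  omega

lemma sum_coord_eq {n N : ℕ} (m m' : Fin n) :
    ∑ k ∈ Finset.Nat.antidiagonalTuple n N, (k m : ℤ)
      = ∑ k ∈ Finset.Nat.antidiagonalTuple n N, (k m' : ℤ) := by
  apply Finset.sum_nbij' (fun k => k ∘ Equiv.swap m m') (fun k => k ∘ Equiv.swap m m') <;>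
    intro k hk
  · rw [Finset.Nat.mem_antidiagonalTuple] at hk ⊢
    rw [← hk]
    exact Equiv.sum_comp (Equiv.swap m m') k
  · rw [Finset.Nat.mem_antidiagonalTuple] at hk ⊢
    rw [← hk]
    exact Equiv.sum_comp (Equiv.swap m m') k
  · funext j; simp
  · funext j; simp
  · simp [Function.comp, Equiv.swap_apply_right]

/-- `n · ∑_{|𝐤′| = |𝐤″| = N} I_m(𝐤′,𝐤″) = (2N + n) · C(N+n−1, n−1)`. -/
theorem stmt15 {n : ℕ} (hn : 1 ≤ n) (N : ℕ) (m : Fin n) :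
    (n : ℤ) * ∑ k' ∈ Finset.Nat.antidiagonalTuple n N,
        ∑ k'' ∈ Finset.Nat.antidiagonalTuple n N, Imf m k' k''
      = (2 * N + n : ℤ) * (Nat.choose (N + n - 1) (n - 1) : ℤ) := by
  set S := Finset.Nat.antidiagonalTuple n N with hS
  have hdiag : ∀ k' ∈ S, ∑ k'' ∈ S, Imf m k' k'' = 2 * (k' m : ℤ) + 1 := by
    intro k' hk'
    rw [Finset.sum_eq_single k' (fun b hb hbne => offdiag m hk' hb hbne)
      (fun h => absurd hk' h)]
    simp [Imf]
  rw [Finset.sum_congr rfl hdiag]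
  have hcard : (S.card : ℤ) = ((N + n - 1).choose (n - 1) : ℤ) := by
    obtain ⟨p, rfl⟩ : ∃ p, n = p + 1 := ⟨n - 1, by omega⟩
    rw [hS, card_adt]
    norm_num
  have hkey : (n : ℤ) * ∑ k ∈ S, (k m : ℤ) = (N : ℤ) * S.card := by
    have h2 : ∑ _m' : Fin n, ∑ k ∈ S, (k m : ℤ) = (n : ℤ) * ∑ k ∈ S, (k m : ℤ) := by
      rw [Finset.sum_const, Finset.card_univ, Fintype.card_fin, nsmul_eq_mul]
    have h3 : ∑ m' : Fin n, ∑ k ∈ S, (k m' : ℤ) = (N : ℤ) * S.card := by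
      rw [Finset.sum_comm]
      have h5 : ∀ k ∈ S, ∑ m' : Fin n, (k m' : ℤ) = (N : ℤ) := by
        intro k hk
        rw [← Nat.cast_sum]
        exact_mod_cast congrArg Nat.cast (Finset.Nat.mem_antidiagonalTuple.mp hk)
      rw [Finset.sum_congr rfl h5, Finset.sum_const, nsmul_eq_mul, mul_comm]
    have h4 : ∑ m' : Fin n, ∑ k ∈ S, (k m' : ℤ) = ∑ _m' : Fin n, ∑ k ∈ S, (k m : ℤ) :=
      Finset.sum_congr rfl fun m' _ => sum_coord_eq m' m
    rw [← h2, ← h4, h3]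
  calc (n : ℤ) * ∑ k ∈ S, (2 * (k m : ℤ) + 1)
      = 2 * ((n : ℤ) * ∑ k ∈ S, (k m : ℤ)) + (n : ℤ) * S.card := by
        rw [Finset.sum_add_distrib, Finset.sum_const, ← Finset.mul_sum, nsmul_eq_mul]
        ring
    _ = (2 * N + n : ℤ) * S.card := by rw [hkey]; ring
    _ = (2 * N + n : ℤ) * ((N + n - 1).choose (n - 1) : ℤ) := by rw [hcard]
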